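/- In the recursive path construction on a $\sqrt{\mu} \times \sqrt{\mu}$ grid where each subproblem of side $k > 1$ independently 'successfully terminates' with probability at least $p = \Omega(1/\sqrt{\log \mu})$ (and otherwise recurses into two subproblems of side $k/2$), the expected number of failed leaves (subproblems reaching side $1$) is at most $\sqrt{\mu} \cdot (1-p)^{\log_2 \sqrt{\mu} - 1} = o(\sqrt{\mu})$, and hence with probability $1 - o(1)$ the number of failed leaves is less than $\sqrt{\mu}/2$. -/

import Mathlib

open scoped Classical

/-- In a binary recursion tree of depth `d` over `s = 2^d` leaves, the ancestor of
leaf `ℓ` at level `i` is represented by its leftmost descendant leaf. -/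
def ancestorRep {d s : ℕ} (ℓ : Fin s) (i : Fin d) : Fin s :=
  ⟨(ℓ : ℕ) - (ℓ : ℕ) % 2 ^ (d - (i : ℕ)), Nat.lt_of_le_of_lt (Nat.sub_le _ _) ℓ.isLt⟩

/-- Probability of an outcome `ω` when each node `(level, leftmost leaf)` of the tree
independently succeeds (`true`) with probability `q node`. -/
noncomputable def treeP {d s : ℕ} (q : Fin d × Fin s → ℝ)
    (ω : Fin d × Fin s → Bool) : ℝ :=
  ∏ node : Fin d × Fin s, if ω node then q node else 1 - q node

/-- The failed leaves of outcome `ω`: leaves all of whose `d - 1` proper ancestors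
(at levels `0, …, d-2`) failed to successfully terminate. -/
noncomputable def failedLeaves {d s : ℕ} (ω : Fin d × Fin s → Bool) : Finset (Fin s) :=
  Finset.univ.filter (fun ℓ =>
    ∀ i : Fin d, (i : ℕ) < d - 1 → ω (i, ancestorRep ℓ i) = false)

lemma sum_indicator_eq {α : Type*} [Fintype α] [DecidableEq α] (q : α → ℝ) (S : Finset α) :
    ∑ ω : α → Bool, (∏ a, if ω a then q a else 1 - q a) *
      (if ∀ a ∈ S, ω a = false then (1:ℝ) else 0) = ∏ a ∈ S, (1 - q a) := by
  have key : ∀ ω : α → Bool,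
      (∏ a, if ω a then q a else 1 - q a) * (if ∀ a ∈ S, ω a = false then (1:ℝ) else 0)
      = ∏ a, ((if ω a then q a else 1 - q a) *
          (if a ∈ S then (if ω a then (0:ℝ) else 1) else 1)) := by
    intro ω
    rw [Finset.prod_mul_distrib]
    congr 1
    by_cases h : ∀ a ∈ S, ω a = false
    · rw [if_pos h]
      refine (Finset.prod_eq_one ?_).symm
      intro a _
      by_cases ha : a ∈ S
      · simp [ha, h a ha]
      · simp [ha]
    · rw [if_neg h]
      push_neg at h
      obtain ⟨a, haS, haω⟩ := h
      refine (Finset.prod_eq_zero (Finset.mem_univ a) ?_).symm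
      simp [haS, haω]
  simp_rw [key]
  rw [← Fintype.piFinset_univ,
    Finset.sum_prod_piFinset Finset.univ
      (fun a b => (if b = true then q a else 1 - q a) * (if a ∈ S then (if b = true then (0:ℝ) else 1) else 1))]
  have : ∀ a : α, (∑ b : Bool, (if b then q a else 1 - q a) *
      (if a ∈ S then (if b then (0:ℝ) else 1) else 1))
      = if a ∈ S then 1 - q a else 1 := by
    intro a
    by_cases ha : a ∈ S <;> simp [ha]
  simp_rw [this]
  rw [Finset.prod_ite_mem, Finset.univ_inter]

/-- In the recursive path construction on a `√μ × √μ` grid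
(`√μ = s = 2^d`), where each subproblem of side `> 1` independently successfully
terminates with probability at least `p`, the expected number of failed leaves is at
most `s (1-p)^{d-1}` (which is `o(s)` when `p = Ω(1/√(log μ))`), and by Markov the
probability that at least `s/2` leaves fail is at most `2 (1-p)^{d-1}`; hence with
probability `1 - o(1)` fewer than `√μ/2` leaves fail. -/
theorem stmt11 (d : ℕ) (hd : 1 ≤ d) (s : ℕ) (hs : s = 2 ^ d)
    (p : ℝ) (hp0 : 0 < p) (hp1 : p ≤ 1)
    (q : Fin d × Fin s → ℝ) (hq : ∀ node, p ≤ q node ∧ q node ≤ 1) :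
    (∑ ω : Fin d × Fin s → Bool, treeP q ω * ((failedLeaves ω).card : ℝ))
        ≤ (s : ℝ) * (1 - p) ^ (d - 1)
    ∧ (∑ ω : Fin d × Fin s → Bool,
          if (s : ℝ) / 2 ≤ ((failedLeaves ω).card : ℝ) then treeP q ω else 0)
        ≤ 2 * (1 - p) ^ (d - 1) := by
  have hs0 : 0 < s := hs ▸ Nat.two_pow_pos d
  set Sl : Fin s → Finset (Fin d × Fin s) := fun ℓ =>
    (Finset.univ.filter fun i : Fin d => (i : ℕ) < d - 1).image
      (fun i => (i, ancestorRep ℓ i)) with hSl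
  have hmem : ∀ (ω : Fin d × Fin s → Bool) (ℓ : Fin s),
      ℓ ∈ failedLeaves ω ↔ ∀ a ∈ Sl ℓ, ω a = false := by
    intro ω ℓ
    simp only [failedLeaves, Finset.mem_filter, Finset.mem_univ, true_and, hSl,
      Finset.mem_image]
    constructor
    · intro h a ha
      obtain ⟨i, hi, hia⟩ := ha
      subst hia
      exact h i (by simpa using hi)
    · intro h i hi
      exact h _ ⟨i, by simp [hi], rfl⟩
  have hcard : ∀ ℓ : Fin s, (Sl ℓ).card = d - 1 := by
    intro ℓ
    rw [hSl]
    rw [Finset.card_image_of_injective _ (fun i j h => (Prod.mk.injEq _ _ _ _).mp h |>.1)]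
    have h1 : ∀ i ∈ (Finset.univ.filter fun i : Fin d => (i : ℕ) < d - 1),
        (i : ℕ) ∈ Finset.range (d - 1) := by
      intro i hi
      simp only [Finset.mem_filter] at hi
      exact Finset.mem_range.mpr hi.2
    have h2 : ∀ i ∈ (Finset.univ.filter fun i : Fin d => (i : ℕ) < d - 1),
        ∀ j ∈ (Finset.univ.filter fun i : Fin d => (i : ℕ) < d - 1),
        (i : ℕ) = (j : ℕ) → i = j := fun i _ j _ h => Fin.ext h
    have h3 : ∀ j ∈ Finset.range (d - 1),
        ∃ i, ∃ _ : i ∈ (Finset.univ.filter fun i : Fin d => (i : ℕ) < d - 1), (i : ℕ) = j := by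
      intro j hj
      have hjd : j < d - 1 := Finset.mem_range.mp hj
      exact ⟨⟨j, lt_of_lt_of_le hjd (Nat.sub_le d 1)⟩, ⟨by simp [hjd], rfl⟩⟩
    exact (Finset.card_bij (i := fun (i : Fin d) _ => (i : ℕ)) h1 h2 h3).trans
      (Finset.card_range (d - 1))
  have hqprod : ∀ ℓ : Fin s, ∏ a ∈ Sl ℓ, (1 - q a) ≤ (1 - p) ^ (d - 1) := by
    intro ℓ
    calc ∏ a ∈ Sl ℓ, (1 - q a) ≤ ∏ _a ∈ Sl ℓ, (1 - p) := by
          refine Finset.prod_le_prod (fun a _ => by linarith [(hq a).2]) ?_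
          intro a _
          linarith [(hq a).1]
      _ = (1 - p) ^ (d - 1) := by rw [Finset.prod_const, hcard ℓ]
  have hE : (∑ ω : Fin d × Fin s → Bool, treeP q ω * ((failedLeaves ω).card : ℝ))
      ≤ (s : ℝ) * (1 - p) ^ (d - 1) := by
    have expand : ∀ ω : Fin d × Fin s → Bool,
        treeP q ω * ((failedLeaves ω).card : ℝ)
        = ∑ ℓ : Fin s, treeP q ω * (if ∀ a ∈ Sl ℓ, ω a = false then (1:ℝ) else 0) := by
      intro ω
      rw [← Finset.mul_sum]
      congr 1
      have hfl : failedLeaves ω = Finset.univ.filter (fun ℓ => ∀ a ∈ Sl ℓ, ω a = false) := by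
        ext ℓ
        simp only [Finset.mem_filter, Finset.mem_univ, true_and]
        exact hmem ω ℓ
      rw [hfl, Finset.card_eq_sum_ones]
      push_cast
      rw [Finset.sum_filter]
    calc (∑ ω : Fin d × Fin s → Bool, treeP q ω * ((failedLeaves ω).card : ℝ))
        = ∑ ℓ : Fin s, ∑ ω : Fin d × Fin s → Bool,
            treeP q ω * (if ∀ a ∈ Sl ℓ, ω a = false then (1:ℝ) else 0) := by
          simp_rw [expand]
          rw [Finset.sum_comm]
      _ = ∑ ℓ : Fin s, ∏ a ∈ Sl ℓ, (1 - q a) := by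
          refine Finset.sum_congr rfl fun ℓ _ => ?_
          simpa [treeP] using sum_indicator_eq q (Sl ℓ)
      _ ≤ ∑ _ℓ : Fin s, (1 - p) ^ (d - 1) := Finset.sum_le_sum fun ℓ _ => hqprod ℓ
      _ = (s : ℝ) * (1 - p) ^ (d - 1) := by
          rw [Finset.sum_const, Finset.card_univ, Fintype.card_fin, nsmul_eq_mul]
  refine ⟨hE, ?_⟩
  have htP : ∀ ω : Fin d × Fin s → Bool, 0 ≤ treeP q ω := by
    intro ω
    refine Finset.prod_nonneg fun a _ => ?_
    by_cases h : ω a <;> simp [h] <;> linarith [(hq a).1, (hq a).2]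
  have hscast : (0:ℝ) < (s : ℝ) := by exact_mod_cast hs0
  calc (∑ ω : Fin d × Fin s → Bool,
          if (s : ℝ) / 2 ≤ ((failedLeaves ω).card : ℝ) then treeP q ω else 0)
      ≤ ∑ ω : Fin d × Fin s → Bool, treeP q ω * ((failedLeaves ω).card : ℝ) * (2 / s) := by
        refine Finset.sum_le_sum fun ω _ => ?_
        by_cases h : (s : ℝ) / 2 ≤ ((failedLeaves ω).card : ℝ)
        · rw [if_pos h]
          have h1 : (1:ℝ) ≤ ((failedLeaves ω).card : ℝ) * (2 / s) := by
            calc (1:ℝ) = ((s:ℝ) / 2) * (2 / s) := by field_simp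
              _ ≤ ((failedLeaves ω).card : ℝ) * (2 / s) :=
                  mul_le_mul_of_nonneg_right h (by positivity)
          calc treeP q ω = treeP q ω * 1 := (mul_one _).symm
            _ ≤ treeP q ω * (((failedLeaves ω).card : ℝ) * (2 / s)) :=
                mul_le_mul_of_nonneg_left h1 (htP ω)
            _ = treeP q ω * ((failedLeaves ω).card : ℝ) * (2 / s) := by ring
        · rw [if_neg h]
          exact mul_nonneg (mul_nonneg (htP ω) (by positivity)) (by positivity)
    _ = (∑ ω : Fin d × Fin s → Bool, treeP q ω * ((failedLeaves ω).card : ℝ)) * (2 / s) := by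
        rw [← Finset.sum_mul]
    _ ≤ ((s : ℝ) * (1 - p) ^ (d - 1)) * (2 / s) := by
        refine mul_le_mul_of_nonneg_right hE (by positivity)
    _ = 2 * (1 - p) ^ (d - 1) := by field_simp
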